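/- For every natural number n, f_a(n) = (1/(r−1)!) Σ_{j=0}^{⌊n/D⌋} (−1)^j binom(r, j) · Σ over all tuples (j_1,…,j_r) of integers with 0 ≤ j_k ≤ D/a_k − 1 for all k and a_1j_1+⋯+a_rj_r ≡ n (mod D), of ∏_{ℓ=1}^{r−1} ((n − a_1j_1 − ⋯ − a_rj_r)/D + ℓ − j). -/

import Mathlib

open Polynomial Finset fwdDiff

/-- `f_a(n)`: the number of tuples `j` with `0 ≤ j k ≤ D / a k - 1` for all `k`
and `∑ k, a k * j k = n`. -/
noncomputable def fa {r : ℕ} (a : Fin r → ℕ) (D n : ℕ) : ℕ :=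
  Nat.card {j : Fin r → ℕ // (∀ k, j k ≤ D / a k - 1) ∧ ∑ k, a k * j k = n}


lemma fwdDiff_iter_zero (n : ℕ) : (fwdDiff (1:ℚ))^[n] (0 : ℚ → ℚ) = 0 := by
  apply Function.iterate_fixed
  ext x; simp [fwdDiff]

lemma fwdDiff_iter_eval_eq_zero : ∀ (n : ℕ) (p : ℚ[X]), p.natDegree < n →
    (fwdDiff (1:ℚ))^[n] (fun x => p.eval x) = 0 := by
  intro n
  induction n with
  | zero => intro p hp; omega
  | succ n ih =>
    intro p hp
    rw [Function.iterate_succ_apply]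
    have hΔ : (fwdDiff (1:ℚ)) (fun x => p.eval x) = fun x => (p.comp (X + C 1) - p).eval x := by
      ext x; simp [fwdDiff, eval_comp]
    rw [hΔ]
    by_cases h0 : p.natDegree = 0
    · obtain ⟨c, rfl⟩ := Polynomial.natDegree_eq_zero.mp h0
      simp [C_comp]; exact fwdDiff_iter_zero n
    · have hp0 : p ≠ 0 := fun h => h0 (by simp [h])
      set q : ℚ[X] := p.comp (X + C 1) - p with hq
      have hcomp0 : p.comp (X + C 1) ≠ 0 := by
        simpa using (Polynomial.comp_X_add_C_ne_zero_iff (t := (1:ℚ))).mpr hp0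
      have hXC : (X + C 1 : ℚ[X]).natDegree = 1 := natDegree_X_add_C 1
      have hdeg : (p.comp (X + C 1)).degree = p.degree := by
        rw [degree_eq_natDegree hcomp0, degree_eq_natDegree hp0]
        norm_cast
        rw [natDegree_comp, hXC, mul_one]
      have hlc : (p.comp (X + C 1)).leadingCoeff = p.leadingCoeff := by
        rw [Polynomial.leadingCoeff_comp (by rw [hXC]; norm_num), (monic_X_add_C (1:ℚ)).leadingCoeff, one_pow, mul_one]
      have hdq : q.degree < p.degree := hdeg ▸ degree_sub_lt hdeg hcomp0 hlc
      have hnq : q.natDegree < n := by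
        rcases eq_or_ne q 0 with h | h
        · simp [h]; omega
        · have := Polynomial.natDegree_lt_natDegree h hdq
          omega
      exact ih q hnq

lemma alt_sum_eval (r : ℕ) (p : ℚ[X]) (hp : p.natDegree < r) :
    ∑ j ∈ Finset.range (r+1), (-1:ℚ)^j * (r.choose j) * p.eval (j:ℚ) = 0 := by
  have h := fwdDiff_iter_eq_sum_shift (1:ℚ) (fun x => p.eval x) r 0
  rw [fwdDiff_iter_eval_eq_zero r p hp] at h
  simp only [Pi.zero_apply, zsmul_eq_mul, zero_add, nsmul_eq_mul, mul_one] at h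
  push_cast at h
  have h2 : ∑ j ∈ Finset.range (r+1), (-1:ℚ)^j * (r.choose j) * p.eval (j:ℚ)
      = (-1:ℚ)^r * ∑ j ∈ Finset.range (r+1), (-1:ℚ)^(r-j) * (r.choose j) * p.eval (j:ℚ) := by
    rw [Finset.mul_sum]
    refine Finset.sum_congr rfl fun j hj => ?_
    have hj' : j ≤ r := Nat.lt_succ_iff.mp (Finset.mem_range.mp hj)
    have hsgn : (-1:ℚ)^r * (-1:ℚ)^(r-j) = (-1:ℚ)^j := by
      rw [← pow_add]
      have h3 : r + (r - j) = 2*(r-j) + j := by omega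
      rw [h3, pow_add, pow_mul]
      norm_num
    rw [← mul_assoc, ← mul_assoc, hsgn]
  rw [h2, ← h, mul_zero]

lemma key_sum (r D n s : ℕ) (hr : 1 ≤ r) (hD : 0 < D) (m : ℤ)
    (hm : m * D = (n:ℤ) - s) (hsr : s + r ≤ r * D) :
    ∑ j ∈ Finset.range (n / D + 1), (-1:ℚ)^j * (r.choose j) *
      ∏ ℓ ∈ Finset.Icc 1 (r-1), ((m:ℚ) + (ℓ:ℚ) - (j:ℚ))
    = (r-1).factorial * (if s = n then 1 else 0) := by
  have hMD : (n / D) * D ≤ n := Nat.div_mul_le_self n D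
  rcases lt_trichotomy s n with hsn | hsn | hsn
  · -- s < n : sum is 0
    rw [if_neg (by omega), mul_zero]
    have hm1 : 1 ≤ m := by
      have h1 : 0 < m * D := by omega
      nlinarith
    set mn : ℕ := m.toNat with hmn
    have hmnm : (mn:ℤ) = m := by omega
    have hmn1 : 1 ≤ mn := by omega
    have hmnM : mn ≤ n / D := by
      rw [Nat.le_div_iff_mul_le hD]
      have : (mn:ℤ) * D ≤ n := by rw [hmnm]; omega
      exact_mod_cast this
    set K := max (n / D) r with hK
    set G : ℕ → ℚ := fun j => (-1:ℚ)^j * (r.choose j) *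
      ∏ ℓ ∈ Finset.Icc 1 (r-1), ((m:ℚ) + (ℓ:ℚ) - (j:ℚ)) with hG
    have hvan : ∀ j, n / D + 1 ≤ j → G j = 0 := by
      intro j hj
      rcases lt_or_ge r j with h | h
      · simp [hG, Nat.choose_eq_zero_of_lt h]
      · apply mul_eq_zero_of_right
        apply Finset.prod_eq_zero (i := j - mn)
        · simp only [Finset.mem_Icc]; omega
        · have h1 : ((j - mn : ℕ):ℚ) = (j:ℚ) - (m:ℚ) := by
            have h2 : ((j - mn : ℕ):ℤ) = (j:ℤ) - m := by omega
            exact_mod_cast congrArg (Int.cast : ℤ → ℚ) h2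
          rw [h1]; ring
    have e1 : ∑ j ∈ Finset.range (n / D + 1), G j = ∑ j ∈ Finset.range (K + 1), G j := by
      apply Finset.sum_subset
      · apply Finset.range_subset_range.mpr; omega
      · intro j _ hj
        exact hvan j (by simpa using hj)
    have e2 : ∑ j ∈ Finset.range (r + 1), G j = ∑ j ∈ Finset.range (K + 1), G j := by
      apply Finset.sum_subset
      · apply Finset.range_subset_range.mpr; omega
      · intro j _ hj
        simp only [Finset.mem_range, not_lt] at hj
        simp [hG, Nat.choose_eq_zero_of_lt (by omega : r < j)]
    show ∑ j ∈ Finset.range (n / D + 1), G j = 0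
    rw [e1, ← e2]
    set p : ℚ[X] := ∏ ℓ ∈ Finset.Icc 1 (r-1), (C ((m:ℚ) + ℓ) - X) with hp
    have hdegp : p.natDegree < r := by
      rw [hp, Polynomial.natDegree_prod]
      · have : ∀ ℓ ∈ Finset.Icc 1 (r-1), (C ((m:ℚ) + ℓ) - X).natDegree = 1 := by
          intro ℓ _
          have : C ((m:ℚ) + ℓ) - X = -(X - C ((m:ℚ) + ℓ)) := by ring
          rw [this, natDegree_neg, natDegree_X_sub_C]
        rw [Finset.sum_congr rfl this]
        simp [Nat.card_Icc]
        omega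
      · intro ℓ _
        intro h
        have := congrArg (Polynomial.eval ((m:ℚ) + ℓ + 1)) h
        simp at this
    have heval : ∀ j : ℕ, p.eval (j:ℚ) = ∏ ℓ ∈ Finset.Icc 1 (r-1), ((m:ℚ) + (ℓ:ℚ) - (j:ℚ)) := by
      intro j
      rw [hp, Polynomial.eval_prod]
      exact Finset.prod_congr rfl fun ℓ _ => by simp
    have := alt_sum_eval r p hdegp
    rw [Finset.sum_congr rfl (fun j _ => by rw [heval j])] at this
    exact this
  · -- s = n : m = 0, sum = (r-1)!
    have hm0 : m = 0 := by
      have : m * (D:ℤ) = 0 := by omega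
      rcases mul_eq_zero.mp this with h | h
      · exact h
      · omega
    subst hm0
    rw [if_pos hsn, mul_one]
    have hMr : n / D ≤ r - 1 := by
      have : n / D < r := Nat.div_lt_of_lt_mul (by rw [mul_comm]; omega)
      omega
    rw [Finset.sum_eq_single 0]
    · simp only [pow_zero, Nat.choose_zero_right, Nat.cast_one, one_mul, Nat.cast_zero,
        Int.cast_zero, zero_add, sub_zero]
      rw [← Nat.cast_prod, ← Finset.Ico_add_one_right_eq_Icc, Finset.prod_Ico_id_eq_factorial]
    · intro j hj hj0
      apply mul_eq_zero_of_right
      apply Finset.prod_eq_zero (i := j)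
      · simp only [Finset.mem_Icc]
        constructor
        · omega
        · have := Finset.mem_range.mp hj; omega
      · push_cast; ring
    · intro h; simp at h
  · -- s > n : m < 0, all terms 0
    rw [if_neg (by omega), mul_zero]
    have hmneg : m < 0 := by nlinarith [hm]
    apply Finset.sum_eq_zero
    intro j hj
    apply mul_eq_zero_of_right
    have hjM : j ≤ n / D := by have := Finset.mem_range.mp hj; omega
    have hjm : (j:ℤ) ≤ m + r - 1 := by
      have h1 : (j:ℤ) * D ≤ ((n/D : ℕ):ℤ) * D := by
        have : (j:ℤ) ≤ ((n/D:ℕ):ℤ) := by exact_mod_cast hjM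
        exact mul_le_mul_of_nonneg_right this (by positivity)
      have h2 : ((n/D:ℕ):ℤ) * D ≤ (n:ℤ) := by exact_mod_cast hMD
      have h3 : (j:ℤ) * D < (m + r) * D := by
        have : (n:ℤ) = m * D + s := by omega
        nlinarith
      have := lt_of_mul_lt_mul_right (by linarith [h3] : (j:ℤ)*D < (m+r)*D) (by positivity : (0:ℤ) ≤ D)
      omega
    set ℓ0 : ℕ := j + (-m).toNat with hℓ0
    have hℓ0c : (ℓ0 : ℤ) = j - m := by simp [hℓ0]; omega
    apply Finset.prod_eq_zero (i := ℓ0)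
    · simp only [Finset.mem_Icc]; omega
    · have : (ℓ0:ℚ) = (j:ℚ) - (m:ℚ) := by exact_mod_cast congrArg (Int.cast : ℤ → ℚ) hℓ0c
      rw [this]; ring

theorem stmt6 (r : ℕ) (hr : 1 ≤ r) (a : Fin r → ℕ) (ha : ∀ i, 0 < a i)
    (D : ℕ) (hD : 0 < D) (hdvd : ∀ i, a i ∣ D) :
    ∀ n : ℕ, (fa a D n : ℚ) =
      (1 / (r - 1).factorial : ℚ) *
        ∑ j ∈ Finset.range (n / D + 1),
          (-1) ^ j * (r.choose j : ℚ) *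
            ∑ t ∈ Finset.univ.filter
                (fun t : ∀ k : Fin r, Fin (D / a k) =>
                  (∑ k, a k * (t k : ℕ)) % D = n % D),
              ∏ ℓ ∈ Finset.Icc 1 (r - 1),
                (((n : ℚ) - ∑ i, (a i : ℚ) * (t i : ℕ)) / (D : ℚ) + (ℓ : ℚ) - (j : ℚ)) := by
  intro n
  classical
  have hDk : ∀ k : Fin r, 0 < D / a k := fun k => Nat.div_pos (Nat.le_of_dvd hD (hdvd k)) (ha k)
  set P : (∀ k : Fin r, Fin (D / a k)) → ℕ := fun t => ∑ k, a k * (t k : ℕ) with hP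
  set F : Finset (∀ k : Fin r, Fin (D / a k)) :=
    Finset.univ.filter (fun t => (∑ k, a k * (t k : ℕ)) % D = n % D) with hF
  -- counting side
  have hfa : fa a D n = (Finset.univ.filter (fun t => P t = n)).card := by
    rw [fa]
    have e : {j : Fin r → ℕ // (∀ k, j k ≤ D / a k - 1) ∧ ∑ k, a k * j k = n}
        ≃ {t : ∀ k : Fin r, Fin (D / a k) // P t = n} :=
      { toFun := fun j => ⟨fun k => ⟨j.1 k, by have := j.2.1 k; have := hDk k; omega⟩, by
          simpa [hP] using j.2.2⟩
        invFun := fun t => ⟨fun k => (t.1 k : ℕ), ⟨fun k => by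
          show (t.1 k : ℕ) ≤ D / a k - 1
          have := (t.1 k).isLt; omega,
          by simpa [hP] using t.2⟩⟩
        left_inv := fun j => rfl
        right_inv := fun t => rfl }
    rw [Nat.card_congr e, Nat.card_eq_fintype_card, Fintype.card_subtype]
  -- bounds
  have har : r ≤ ∑ k, a k := by
    calc r = ∑ _k : Fin r, 1 := by simp
      _ ≤ ∑ k, a k := Finset.sum_le_sum fun k _ => ha k
  have hPle : ∀ t : ∀ k : Fin r, Fin (D / a k), P t + ∑ k, a k ≤ r * D := by
    intro t
    have h1 : ∀ k, a k * (t k : ℕ) + a k ≤ D := by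
      intro k
      have h2 : (t k : ℕ) + 1 ≤ D / a k := (t k).isLt
      calc a k * (t k : ℕ) + a k = a k * ((t k : ℕ) + 1) := by ring
        _ ≤ a k * (D / a k) := Nat.mul_le_mul_left _ h2
        _ = D := Nat.mul_div_cancel' (hdvd k)
    calc P t + ∑ k, a k = ∑ k, (a k * (t k : ℕ) + a k) := by
          rw [hP, ← Finset.sum_add_distrib]
      _ ≤ ∑ _k : Fin r, D := Finset.sum_le_sum (fun k _ => h1 k)
      _ = r * D := by simp [Finset.sum_const, Finset.card_univ, mul_comm]
  -- swap sums
  have hswap : ∑ j ∈ Finset.range (n / D + 1), (-1:ℚ) ^ j * (r.choose j : ℚ) *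
        ∑ t ∈ F, ∏ ℓ ∈ Finset.Icc 1 (r - 1),
          (((n : ℚ) - ∑ i, (a i : ℚ) * (t i : ℕ)) / (D : ℚ) + (ℓ : ℚ) - (j : ℚ))
      = ∑ t ∈ F, ∑ j ∈ Finset.range (n / D + 1), (-1:ℚ) ^ j * (r.choose j : ℚ) *
          ∏ ℓ ∈ Finset.Icc 1 (r - 1),
            (((n : ℚ) - ∑ i, (a i : ℚ) * (t i : ℕ)) / (D : ℚ) + (ℓ : ℚ) - (j : ℚ)) := by
    simp_rw [Finset.mul_sum]
    exact Finset.sum_comm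
  rw [hswap]
  -- inner sums via key_sum
  have hinner : ∀ t ∈ F, (∑ j ∈ Finset.range (n / D + 1), (-1:ℚ) ^ j * (r.choose j : ℚ) *
        ∏ ℓ ∈ Finset.Icc 1 (r - 1),
          (((n : ℚ) - ∑ i, (a i : ℚ) * (t i : ℕ)) / (D : ℚ) + (ℓ : ℚ) - (j : ℚ)))
      = ((r-1).factorial : ℚ) * (if P t = n then 1 else 0) := by
    intro t ht
    have hmod : P t % D = n % D := by
      have := (Finset.mem_filter.mp ht).2
      simpa [hP] using this
    have hdvd2 : (D:ℤ) ∣ (n:ℤ) - (P t : ℤ) := (Nat.modEq_iff_dvd (n := D)).mp hmod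
    set m : ℤ := ((n:ℤ) - (P t : ℤ)) / D with hmdef
    have hm : m * D = (n:ℤ) - (P t : ℤ) := Int.ediv_mul_cancel hdvd2
    have hcast : ((n : ℚ) - ∑ i, (a i : ℚ) * (t i : ℕ)) / (D : ℚ) = (m : ℚ) := by
      have h1 : (∑ i, (a i : ℚ) * ((t i : ℕ) : ℚ)) = ((P t : ℕ) : ℚ) := by
        rw [hP]; push_cast; ring
      rw [h1]
      have h2 := congrArg (Int.cast : ℤ → ℚ) hm
      push_cast at h2
      field_simp
      linarith
    simp only [hcast]
    exact key_sum r D n (P t) hr hD m hm (by have := hPle t; omega)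
  rw [Finset.sum_congr rfl hinner]
  rw [← Finset.mul_sum]
  have hb : ∑ i ∈ F, (if P i = n then (1:ℚ) else 0)
      = ((Finset.univ.filter (fun t => P t = n)).card : ℚ) := by
    rw [Finset.sum_boole]
    congr 2
    rw [hF, Finset.filter_filter]
    apply Finset.filter_congr
    intro t _
    simp only [hP]
    constructor
    · exact fun h => h.2
    · exact fun h => ⟨by rw [h], h⟩
  rw [hb, hfa]
  have hc : ((r-1).factorial : ℚ) ≠ 0 := Nat.cast_ne_zero.mpr (Nat.factorial_ne_zero _)
  rw [one_div, inv_mul_cancel_left₀ hc]
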